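/- arXiv:1705.09988 — 4 statements merged into one kernel-verified Lean document; each statement's English description precedes it below -/
import Mathlib

section
/- The ESBIII density f(x) = (ck/2) (sign(x)·x/(1+sign(x)ε))^{-(c+1)} (1 + (sign(x)·x/(1+sign(x)ε))^{-c})^{-(k+1)}, defined for x ∈ ℝ \ {0}, integrates to 1 over ℝ. -/
open Real
open MeasureTheory Set Filter
set_option maxHeartbeats 1000000

lemma esb_aux (c k a : ℝ) (hc : 0 < c) (hk : 0 < k) (ha : 0 < a) :
    IntegrableOn (fun x : ℝ => (c * k / 2) * (x / a) ^ (-(c + 1)) *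
        (1 + (x / a) ^ (-c)) ^ (-(k + 1))) (Ioi 0) ∧
    ∫ x in Ioi (0:ℝ), (c * k / 2) * (x / a) ^ (-(c + 1)) *
        (1 + (x / a) ^ (-c)) ^ (-(k + 1)) = a / 2 := by
  set f : ℝ → ℝ := fun x => (c * k / 2) * (x / a) ^ (-(c + 1)) *
        (1 + (x / a) ^ (-c)) ^ (-(k + 1)) with hf
  set g : ℝ → ℝ := fun x => (a / 2) * ((x / a) ^ c / (1 + (x / a) ^ c)) ^ k with hg
  have hderiv : ∀ x ∈ Ioi (0:ℝ), HasDerivAt g (f x) x := by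
    intro x hx
    have hx0 : (0:ℝ) < x := hx
    have hu : (0:ℝ) < x / a := div_pos hx0 ha
    have hP : (0:ℝ) < (x / a) ^ c := rpow_pos_of_pos hu c
    have hD : (0:ℝ) < 1 + (x / a) ^ c := by linarith
    have h1 : HasDerivAt (fun y : ℝ => y / a) (1 / a) x := by
      simpa using (hasDerivAt_id x).div_const a
    have h2 : HasDerivAt (fun y : ℝ => (y / a) ^ c)
        (1 / a * c * (x / a) ^ (c - 1)) x :=
      h1.rpow_const (Or.inl hu.ne')
    have h3 : HasDerivAt (fun y : ℝ => (y / a) ^ c / (1 + (y / a) ^ c))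
        ((1 / a * c * (x / a) ^ (c - 1) * (1 + (x / a) ^ c) -
          (x / a) ^ c * (1 / a * c * (x / a) ^ (c - 1))) / (1 + (x / a) ^ c) ^ 2) x :=
      h2.div (h2.const_add 1) hD.ne'
    have h4 : HasDerivAt g ((a / 2) *
        ((1 / a * c * (x / a) ^ (c - 1) * (1 + (x / a) ^ c) -
          (x / a) ^ c * (1 / a * c * (x / a) ^ (c - 1))) / (1 + (x / a) ^ c) ^ 2 * k *
          ((x / a) ^ c / (1 + (x / a) ^ c)) ^ (k - 1))) x :=
      (h3.rpow_const (p := k) (Or.inl (div_pos hP hD).ne')).const_mul (a / 2)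
    convert h4 using 1
    have hu' := hu.le
    have e1 : (1:ℝ) + (x/a)^(-c) = (1 + (x/a)^c) / (x/a)^c := by
      rw [rpow_neg hu']; field_simp; ring
    have e2 : ((1 + (x/a)^c) / (x/a)^c) ^ (-(k+1))
        = (1+(x/a)^c)^(-(k+1)) * ((x/a)^c)^(k+1) := by
      rw [Real.div_rpow hD.le hP.le, Real.rpow_neg hP.le, div_eq_mul_inv, inv_inv]
    have e3 : ((x/a)^c)^(k+1) = (x/a)^(c*(k+1)) := (Real.rpow_mul hu' c (k+1)).symm
    have e5 : ((x/a)^c / (1+(x/a)^c))^(k-1) = (x/a)^(c*(k-1)) / (1+(x/a)^c)^(k-1) := by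
      rw [Real.div_rpow hP.le hD.le, ← Real.rpow_mul hu']
    have e8 : (1+(x/a)^c)^(-(k+1)) = ((1+(x/a)^c)^(k+1))⁻¹ := Real.rpow_neg hD.le _
    have hA : (x/a)^(-(c+1)) * (x/a)^(c*(k+1)) = (x/a)^(c*k-1) := by
      rw [← Real.rpow_add hu]; congr 1; ring
    have hA' : (x/a)^(-1-c) * (x/a)^(c*(k+1)) = (x/a)^(c*k-1) := by
      rw [← Real.rpow_add hu]; congr 1; ring
    have hB : (x/a)^(c-1) * (x/a)^(c*(k-1)) = (x/a)^(c*k-1) := by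
      rw [← Real.rpow_add hu]; congr 1; ring
    have hC : (1+(x/a)^c)^(k-1) * ((1+(x/a)^c))^(2:ℕ) = (1+(x/a)^c)^(k+1) := by
      rw [← Real.rpow_natCast (1+(x/a)^c) 2, ← Real.rpow_add hD]
      congr 1; push_cast; ring
    simp only [hf, hg, e1, e2, e3, e5, e8]
    rw [← hC]
    have hD1 : (1+(x/a)^c)^(k-1) ≠ 0 := (rpow_pos_of_pos hD _).ne'
    have hD2 : ((1+(x/a)^c):ℝ)^(2:ℕ) ≠ 0 := pow_ne_zero _ hD.ne'
    have hQ : (x/a)^(-(c+1)) * (x/a)^(c*(k+1)) = (x/a)^(c-1) * (x/a)^(c*(k-1)) := hA.trans hB.symm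
    have hinvA : a * a⁻¹ = 1 := mul_inv_cancel₀ ha.ne'
    simp only [mul_inv]
    linear_combination (c*k/2*(((1+(x/a)^c)^(2:ℕ))⁻¹ * ((1+(x/a)^c)^(k-1))⁻¹)) * hQ
      - (c*k/2*(((1+(x/a)^c)^(2:ℕ))⁻¹ * ((1+(x/a)^c)^(k-1))⁻¹) * (x/a)^(c-1) * (x/a)^(c*(k-1))) * hinvA
  have hpos : ∀ x ∈ Ioi (0:ℝ), 0 ≤ f x := by
    intro x hx
    have hx0 : (0:ℝ) < x := hx
    have hu : (0:ℝ) ≤ x / a := (div_pos hx0 ha).le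
    exact mul_nonneg (mul_nonneg (by positivity) (rpow_nonneg hu _))
      (rpow_nonneg (by positivity) _)
  have hcont : ContinuousWithinAt g (Ici 0) 0 := by
    have h1 : ContinuousAt (fun y : ℝ => (y / a) ^ c) 0 :=
      ((continuous_id.div_const a).continuousAt).rpow_const (Or.inr hc.le)
    have h2 : ContinuousAt (fun y : ℝ => (y / a) ^ c / (1 + (y / a) ^ c)) 0 := by
      apply h1.div (continuousAt_const.add h1)
      simp [Real.zero_rpow hc.ne']
    have h3 : ContinuousAt g 0 := by
      apply ContinuousAt.mul continuousAt_const
      apply ContinuousAt.rpow_const h2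
      right; exact hk.le
    exact h3.continuousWithinAt
  have hlim : Filter.Tendsto g Filter.atTop (nhds (a / 2)) := by
    have t0 : Filter.Tendsto (fun y : ℝ => y / a) Filter.atTop Filter.atTop :=
      Filter.tendsto_id.atTop_div_const ha
    have t1 : Filter.Tendsto (fun y : ℝ => (y / a) ^ c) Filter.atTop Filter.atTop :=
      (tendsto_rpow_atTop hc).comp t0
    have t2 : Filter.Tendsto (fun t : ℝ => t / (1 + t)) Filter.atTop (nhds 1) := by
      have hinv : Filter.Tendsto (fun t : ℝ => (1 + t)⁻¹) Filter.atTop (nhds 0) :=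
        (Filter.tendsto_atTop_add_const_left _ 1 Filter.tendsto_id).inv_tendsto_atTop
      have := Filter.Tendsto.sub (tendsto_const_nhds (x := (1:ℝ))) hinv
      rw [sub_zero] at this
      apply this.congr'
      filter_upwards [Filter.eventually_gt_atTop (0:ℝ)] with t ht
      have h1t : (1:ℝ) + t ≠ 0 := by linarith
      field_simp
      ring
    have t3 : Filter.Tendsto (fun y : ℝ => (y / a) ^ c / (1 + (y / a) ^ c))
        Filter.atTop (nhds 1) := t2.comp t1
    have t4 : Filter.Tendsto (fun y : ℝ => ((y / a) ^ c / (1 + (y / a) ^ c)) ^ k)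
        Filter.atTop (nhds 1) := by
      have hco : ContinuousAt (fun t : ℝ => t ^ k) 1 :=
        Real.continuousAt_rpow_const 1 k (Or.inl one_ne_zero)
      have := hco.tendsto.comp t3
      simpa [Real.one_rpow, Function.comp_def] using this
    have := t4.const_mul (a / 2)
    simpa using this
  have g0 : g 0 = 0 := by
    simp only [hg, zero_div, Real.zero_rpow hc.ne', add_zero, zero_div,
      Real.zero_rpow hk.ne', mul_zero]
  constructor
  · exact integrableOn_Ioi_deriv_of_nonneg hcont hderiv hpos hlim
  · rw [integral_Ioi_of_hasDerivAt_of_nonneg hcont hderiv hpos hlim, g0, sub_zero]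

/-- sign function with sign(0) = 1, as in the paper. -/
noncomputable def sgn (x : ℝ) : ℝ := if x < 0 then -1 else 1

/-- The ESBIII density integrates to 1 over ℝ. -/
theorem esbiii_pdf_integral (c k ε : ℝ) (hc : 0 < c) (hk : 0 < k)
    (hε : ε ∈ Set.Ioo (-1 : ℝ) 1) :
    ∫ x : ℝ,
      (c * k / 2) * ((sgn x * x) / (1 + sgn x * ε)) ^ (-(c + 1)) *
        (1 + ((sgn x * x) / (1 + sgn x * ε)) ^ (-c)) ^ (-(k + 1)) = 1 := by
  have ha1 : (0:ℝ) < 1 + ε := by linarith [hε.1]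
  have ha2 : (0:ℝ) < 1 - ε := by linarith [hε.2]
  set F : ℝ → ℝ := fun x =>
      (c * k / 2) * ((sgn x * x) / (1 + sgn x * ε)) ^ (-(c + 1)) *
        (1 + ((sgn x * x) / (1 + sgn x * ε)) ^ (-c)) ^ (-(k + 1)) with hF
  obtain ⟨int1, val1⟩ := esb_aux c k (1 + ε) hc hk ha1
  obtain ⟨int2, val2⟩ := esb_aux c k (1 - ε) hc hk ha2
  have heq1 : EqOn F (fun x : ℝ => (c * k / 2) * (x / (1 + ε)) ^ (-(c + 1)) *
      (1 + (x / (1 + ε)) ^ (-c)) ^ (-(k + 1))) (Ioi 0) := by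
    intro x hx
    have hx0 : (0:ℝ) < x := hx
    have hs : sgn x = 1 := by simp [sgn, not_lt.mpr hx0.le]
    simp only [hF, hs, one_mul]
  have heq2 : ∀ x ∈ Ioi (0:ℝ), F (-x) = (c * k / 2) * (x / (1 - ε)) ^ (-(c + 1)) *
      (1 + (x / (1 - ε)) ^ (-c)) ^ (-(k + 1)) := by
    intro x hx
    have hx0 : (0:ℝ) < x := hx
    have hs : sgn (-x) = -1 := by simp [sgn, neg_neg, hx0]
    simp only [hF, hs, neg_mul, one_mul, neg_neg, neg_one_mul, sub_eq_add_neg]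
  have hIoi : IntegrableOn F (Ioi 0) := int1.congr_fun heq1.symm measurableSet_Ioi
  have hcompneg : IntegrableOn (fun x => F (-x)) (Ioi 0) :=
    int2.congr_fun (fun x hx => (heq2 x hx).symm) measurableSet_Ioi
  have hIio : IntegrableOn F (Iio 0) := by
    have A : MeasurableEmbedding fun x : ℝ => -x :=
      (Homeomorph.neg ℝ).isClosedEmbedding.measurableEmbedding
    have key : IntegrableOn F (Iio 0) (Measure.map (fun x : ℝ => -x) volume) ↔
        IntegrableOn (F ∘ fun x : ℝ => -x) ((fun x : ℝ => -x) ⁻¹' Iio 0) volume :=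
      A.integrableOn_map_iff
    rw [Measure.map_neg_eq_self (volume : Measure ℝ)] at key
    rw [key]
    have hpre : ((fun x : ℝ => -x) ⁻¹' Iio 0) = Ioi 0 := by
      ext y; simp
    rw [hpre]
    exact hcompneg
  have hIic : IntegrableOn F (Iic 0) := by
    apply hIio.congr_set_ae
    exact (MeasureTheory.Iio_ae_eq_Iic).symm
  have split := intervalIntegral.integral_Iic_add_Ioi (b := (0:ℝ)) hIic hIoi
  have v1 : ∫ x in Ioi (0:ℝ), F x = (1 + ε) / 2 := by
    rw [setIntegral_congr_fun measurableSet_Ioi heq1]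
    exact val1
  have v2 : ∫ x in Iic (0:ℝ), F x = (1 - ε) / 2 := by
    have e0 : ∫ x in Iic (0:ℝ), F x = ∫ x in Ioi (0:ℝ), F (-x) := by
      rw [integral_comp_neg_Ioi, neg_zero]
    rw [e0, setIntegral_congr_fun measurableSet_Ioi (fun x hx => heq2 x hx)]
    exact val2
  rw [← split, v1, v2]
  ring
end

section
/- The derivative of the ESBIII CDF F(x) (given piecewise by F(x) = (1-ε)/2 + ((1+ε)/2)(1+(x/(1+ε))^{-c})^{-k} for x ≥ 0 and F(x) = ((1-ε)/2)(1-(1+(-x/(1-ε))^{-c})^{-k}) for x < 0) equals the ESBIII density f(x) = (ck/2)(sign(x)x/(1+sign(x)ε))^{-(c+1)}(1+(sign(x)x/(1+sign(x)ε))^{-c})^{-(k+1)} for all x ≠ 0. -/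
open Real

/-- ESBIII CDF. -/
noncomputable def esbiiiCDF (c k ε : ℝ) (x : ℝ) : ℝ :=
  if 0 ≤ x then (1 - ε) / 2 + ((1 + ε) / 2) * (1 + (x / (1 + ε)) ^ (-c)) ^ (-k)
  else ((1 - ε) / 2) * (1 - (1 + (-x / (1 - ε)) ^ (-c)) ^ (-k))

/-- The derivative of the ESBIII CDF equals the ESBIII density at every x ≠ 0. -/
theorem esbiii_cdf_deriv (c k ε : ℝ) (hc : 0 < c) (hk : 0 < k)
    (hε : ε ∈ Set.Ioo (-1 : ℝ) 1) :
    ∀ x : ℝ, x ≠ 0 →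
      HasDerivAt (esbiiiCDF c k ε)
        ((c * k / 2) * ((sgn x * x) / (1 + sgn x * ε)) ^ (-(c + 1)) *
          (1 + ((sgn x * x) / (1 + sgn x * ε)) ^ (-c)) ^ (-(k + 1))) x := by
  obtain ⟨hε1, hε2⟩ := hε
  have hp : (0:ℝ) < 1 + ε := by linarith
  have hm : (0:ℝ) < 1 - ε := by linarith
  intro x hx
  rcases lt_or_gt_of_ne hx with hneg | hpos
  · -- x < 0
    have hs : sgn x = -1 := by simp [sgn, hneg]
    set u : ℝ := -x / (1 - ε) with hu
    have hupos : 0 < u := div_pos (by linarith) hm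
    have h1 : HasDerivAt (fun y : ℝ => -y / (1 - ε)) (-1 / (1 - ε)) x := by
      simpa using ((hasDerivAt_id x).neg.div_const (1 - ε))
    have h2 := h1.rpow_const (p := -c) (Or.inl hupos.ne')
    have h3 := h2.const_add 1
    have hgpos : 0 < 1 + u ^ (-c) := by positivity
    have h4 := h3.rpow_const (p := -k) (Or.inl hgpos.ne')
    have h5 := ((h4.const_sub 1).const_mul ((1 - ε) / 2))
    have heq : esbiiiCDF c k ε =ᶠ[nhds x]
        fun y => ((1 - ε) / 2) * (1 - (1 + (-y / (1 - ε)) ^ (-c)) ^ (-k)) := by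
      filter_upwards [eventually_lt_nhds hneg] with y hy
      simp [esbiiiCDF, not_le.mpr hy]
    refine (HasDerivAt.congr_of_eventuallyEq ?_ heq)
    convert h5 using 1
    · rfl
    rw [hs]
    have e1 : -(c + 1) = -c - 1 := by ring
    have e2 : -(k + 1) = -k - 1 := by ring
    rw [e1, e2]
    have : (-1 : ℝ) * x / (1 + -1 * ε) = u := by rw [hu]; ring_nf
    rw [this]
    field_simp
    rw [hu]; ring_nf
  · -- x > 0
    have hs : sgn x = 1 := by simp [sgn, not_lt.mpr hpos.le]
    set u : ℝ := x / (1 + ε) with hu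
    have hupos : 0 < u := by positivity
    have h1 : HasDerivAt (fun y : ℝ => y / (1 + ε)) (1 / (1 + ε)) x := by
      simpa using ((hasDerivAt_id x).div_const (1 + ε))
    have h2 := h1.rpow_const (p := -c) (Or.inl (by positivity))
    have h3 := h2.const_add 1
    have hgpos : 0 < 1 + u ^ (-c) := by positivity
    have h4 := h3.rpow_const (p := -k) (Or.inl hgpos.ne')
    have h5 := (h4.const_mul ((1 + ε) / 2)).const_add ((1 - ε) / 2)
    have heq : esbiiiCDF c k ε =ᶠ[nhds x]
        fun y => (1 - ε) / 2 + ((1 + ε) / 2) * (1 + (y / (1 + ε)) ^ (-c)) ^ (-k) := by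
      filter_upwards [eventually_gt_nhds hpos] with y hy
      simp [esbiiiCDF, hy.le]
    refine (HasDerivAt.congr_of_eventuallyEq ?_ heq)
    convert h5 using 1
    rw [hs]
    have e1 : -(c + 1) = -c - 1 := by ring
    have e2 : -(k + 1) = -k - 1 := by ring
    rw [e1, e2]
    have : (1 : ℝ) * x / (1 + 1 * ε) = u := by rw [hu]; ring_nf
    rw [this]
    field_simp
    ring
end

section
/- For α > 0 with α(1+1/c) > 1/c and α(k+1) > α(1+1/c) - 1/c, the integral of the α-th power of the positive part of the ESBIII density satisfies ∫₀^∞ f(x)^α dx = (1+ε)(ck/2)^α Γ(α(k+1) - α(1+1/c) + 1/c) Γ(α(1+1/c) - 1/c) / (c Γ(α(k+1))). -/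
open Real

open Set MeasureTheory

lemma betaIntegral_real {a b : ℝ} (ha : 0 < a) (hb : 0 < b) :
    ∫ x in (0:ℝ)..1, x ^ (a - 1) * (1 - x) ^ (b - 1) =
      Real.Gamma a * Real.Gamma b / Real.Gamma (a + b) := by
  have key := Complex.Gamma_mul_Gamma_eq_betaIntegral (s := (a:ℂ)) (t := (b:ℂ))
    (by simpa using ha) (by simpa using hb)
  have hint : Complex.betaIntegral a b =
      ((∫ x in (0:ℝ)..1, x ^ (a - 1) * (1 - x) ^ (b - 1) : ℝ) : ℂ) := by
    rw [Complex.betaIntegral, ← intervalIntegral.integral_ofReal]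
    refine intervalIntegral.integral_congr fun x hx => ?_
    rw [uIcc_of_le zero_le_one] at hx
    rw [Complex.ofReal_mul, Complex.ofReal_cpow hx.1,
      Complex.ofReal_cpow (by linarith [hx.2] : (0:ℝ) ≤ 1 - x)]
    push_cast
    ring
  have hG : Real.Gamma (a + b) ≠ 0 := (Real.Gamma_pos_of_pos (by linarith)).ne'
  rw [hint, ← Complex.ofReal_add, Complex.Gamma_ofReal, Complex.Gamma_ofReal,
    Complex.Gamma_ofReal, ← Complex.ofReal_mul, ← Complex.ofReal_mul] at key
  have := Complex.ofReal_injective key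
  field_simp at this ⊢
  linarith [this]


lemma beta_Ioi_aux {a b : ℝ} (ha : 0 < a) (hb : 0 < b)
    (hbeta : ∫ x in (0:ℝ)..1, x ^ (a - 1) * (1 - x) ^ (b - 1) =
      Real.Gamma a * Real.Gamma b / Real.Gamma (a + b)) :
    ∫ u in Ioi (0:ℝ), u ^ (a - 1) * (1 + u) ^ (-(a + b)) =
      Real.Gamma a * Real.Gamma b / Real.Gamma (a + b) := by
  set f : ℝ → ℝ := fun u => u / (1 + u) with hf
  have himg : f '' Ioi 0 = Ioo 0 1 := by
    ext x
    constructor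
    · rintro ⟨u, hu, rfl⟩
      have hu' : (0:ℝ) < u := hu
      have h1u : (0:ℝ) < 1 + u := by linarith
      exact ⟨by positivity, by rw [div_lt_one h1u]; linarith⟩
    · rintro ⟨hx0, hx1⟩
      refine ⟨x / (1 - x), ?_, ?_⟩
      · have : (0:ℝ) < 1 - x := by linarith
        exact div_pos hx0 this
      · have h1x : (1:ℝ) - x ≠ 0 := by linarith
        simp only [hf]
        field_simp
        ring
  have hderiv : ∀ u ∈ Ioi (0:ℝ), HasDerivWithinAt f (((1 + u) ^ 2)⁻¹) (Ioi 0) u := by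
    intro u hu
    have h1u : (1:ℝ) + u ≠ 0 := by have : (0:ℝ) < u := hu; positivity
    have hd : HasDerivAt (fun x : ℝ => 1 + x) 1 u := by
      simpa using (hasDerivAt_id u).const_add (1:ℝ)
    have : HasDerivAt f ((1 * (1 + u) - u * 1) / (1 + u) ^ 2) u :=
      (hasDerivAt_id u).div hd h1u
    convert this.hasDerivWithinAt using 1
    case e'_9 => ring
    all_goals rfl
  have hinj : InjOn f (Ioi 0) := by
    intro u hu v hv h
    have hu' : (0:ℝ) < u := hu
    have hv' : (0:ℝ) < v := hv
    have h1u : (1:ℝ) + u ≠ 0 := by positivity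
    have h1v : (1:ℝ) + v ≠ 0 := by positivity
    simp only [hf] at h
    field_simp at h
    linarith
  have key := integral_image_eq_integral_abs_deriv_smul measurableSet_Ioi hderiv hinj
    (fun x => x ^ (a - 1) * (1 - x) ^ (b - 1))
  rw [himg] at key
  rw [intervalIntegral.integral_of_le zero_le_one, MeasureTheory.integral_Ioc_eq_integral_Ioo] at hbeta
  rw [key] at hbeta
  rw [← hbeta]
  refine setIntegral_congr_fun measurableSet_Ioi fun u hu => ?_
  have hu' : (0:ℝ) < u := hu
  have h1u : (0:ℝ) < 1 + u := by linarith
  have h1 : (1:ℝ) - u / (1 + u) = (1 + u)⁻¹ := by field_simp; ring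
  rw [smul_eq_mul, hf]
  simp only
  rw [h1, Real.div_rpow hu'.le h1u.le, Real.inv_rpow h1u.le,
    abs_of_pos (by positivity), div_eq_mul_inv, ← Real.rpow_neg h1u.le,
    ← Real.rpow_natCast (1+u) 2, ← Real.rpow_neg h1u.le,
    ← Real.rpow_neg h1u.le]
  rw [show (-(a+b)) = ((-(2:ℕ):ℝ)) + (-(a-1) + -(b-1)) by push_cast; ring,
    Real.rpow_add h1u, Real.rpow_add h1u]
  ring


lemma beta_Ioi {a b : ℝ} (ha : 0 < a) (hb : 0 < b) :
    ∫ u in Ioi (0:ℝ), u ^ (a - 1) * (1 + u) ^ (-(a + b)) =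
      Real.Gamma a * Real.Gamma b / Real.Gamma (a + b) :=
  beta_Ioi_aux ha hb (betaIntegral_real ha hb)

/-- Rényi-entropy integral for the positive part of the ESBIII density. -/
theorem esbiii_renyi_pos (c k ε α : ℝ) (hc : 0 < c) (hk : 0 < k)
    (hε : ε ∈ Set.Ioo (-1 : ℝ) 1) (hα : 0 < α)
    (h1 : 1 / c < α * (1 + 1 / c)) (h2 : α * (1 + 1 / c) - 1 / c < α * (k + 1)) :
    ∫ x in Set.Ioi (0 : ℝ),
        ((c * k / 2) * (x / (1 + ε)) ^ (-(c + 1)) *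
          (1 + (x / (1 + ε)) ^ (-c)) ^ (-(k + 1))) ^ α =
      (1 + ε) * (c * k / 2) ^ α *
        Real.Gamma (α * (k + 1) - α * (1 + 1 / c) + 1 / c) *
        Real.Gamma (α * (1 + 1 / c) - 1 / c) / (c * Real.Gamma (α * (k + 1))) := by
  obtain ⟨hε1, hε2⟩ := hε
  have hε0 : (0:ℝ) < 1 + ε := by linarith
  set C : ℝ := c * k / 2 with hC
  have hC0 : 0 < C := by rw [hC]; positivity
  have ha' : (0:ℝ) < α * (1 + 1 / c) - 1 / c := by linarith
  have hb' : (0:ℝ) < α * (k + 1) - α * (1 + 1 / c) + 1 / c := by linarith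
  set a : ℝ := α * (1 + 1 / c) - 1 / c with ha_def
  set b : ℝ := α * (k + 1) - α * (1 + 1 / c) + 1 / c with hb_def
  have ha : 0 < a := ha'
  have hb : 0 < b := hb'
  have hab : a + b = α * (k + 1) := by rw [ha_def, hb_def]; ring
  set g : ℝ → ℝ := fun y => C ^ α * y ^ (-(c + 1) * α) * (1 + y ^ (-c)) ^ (-(k + 1) * α)
    with hg
  set f : ℝ → ℝ := fun u => (c⁻¹ * C ^ α) * (u ^ (a - 1) * (1 + u) ^ (-(a + b))) with hf
  have step1 : ∫ x in Set.Ioi (0 : ℝ),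
        (C * (x / (1 + ε)) ^ (-(c + 1)) *
          (1 + (x / (1 + ε)) ^ (-c)) ^ (-(k + 1))) ^ α
      = ∫ x in Set.Ioi (0 : ℝ), g ((1 + ε)⁻¹ * x) := by
    refine setIntegral_congr_fun measurableSet_Ioi fun x hx => ?_
    have hx' : (0:ℝ) < x := hx
    have hy : (0:ℝ) < (1 + ε)⁻¹ * x := by positivity
    have hq : (0:ℝ) < 1 + ((1 + ε)⁻¹ * x) ^ (-c) := by positivity
    have hxy : x / (1 + ε) = (1 + ε)⁻¹ * x := by rw [div_eq_inv_mul]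
    rw [hxy, hg]
    simp only
    rw [Real.mul_rpow (by positivity) (by positivity), Real.mul_rpow hC0.le (by positivity),
      Real.rpow_mul hy.le, Real.rpow_mul hq.le]
  have step2 : ∫ x in Set.Ioi (0 : ℝ), g ((1 + ε)⁻¹ * x)
      = (1 + ε) * ∫ y in Set.Ioi (0 : ℝ), g y := by
    rw [MeasureTheory.integral_comp_mul_left_Ioi g 0 (by positivity : (0:ℝ) < (1 + ε)⁻¹)]
    rw [inv_inv, mul_zero, smul_eq_mul]
  have step3 : ∫ y in Set.Ioi (0 : ℝ), g y = ∫ u in Set.Ioi (0 : ℝ), f u := by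
    rw [← MeasureTheory.integral_comp_rpow_Ioi f (p := -c) (neg_ne_zero.mpr hc.ne')]
    refine setIntegral_congr_fun measurableSet_Ioi fun y hy => ?_
    have hy' : (0:ℝ) < y := hy
    have e1 : -(c + 1) * α = (-c - 1) + -c * (a - 1) := by
      rw [ha_def]; field_simp; ring
    have e2 : -(k + 1) * α = -(a + b) := by rw [hab]; ring
    rw [hg, hf]
    simp only [smul_eq_mul]
    rw [e1, e2, Real.rpow_add hy', Real.rpow_mul hy'.le, abs_neg, abs_of_pos hc]
    field_simp
  have step4 : ∫ u in Set.Ioi (0 : ℝ), f u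
      = (c⁻¹ * C ^ α) * (Real.Gamma a * Real.Gamma b / Real.Gamma (a + b)) := by
    rw [hf, MeasureTheory.integral_const_mul, beta_Ioi ha hb]
  rw [step1, step2, step3, step4, hab]
  have hG : Real.Gamma (α * (k + 1)) ≠ 0 := by
    have : 0 < α * (k + 1) := by positivity
    exact (Real.Gamma_pos_of_pos this).ne'
  field_simp
end

section
/- The ESBIII distribution is heavy-tailed: for every λ > 0, lim_{x→∞} e^{λx} (1 - F(x)) = ∞, where F is the ESBIII CDF. -/
open Real Filter

lemma esbiii_slope_limit (k : ℝ) :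
    Tendsto (fun s : ℝ => (1 - (1 + s) ^ (-k)) / s) (nhdsWithin 0 {(0:ℝ)}ᶜ) (nhds k) := by
  have hd : HasDerivAt (fun s : ℝ => (1 + s) ^ (-k)) (-k) 0 := by
    have h1 : HasDerivAt (fun x : ℝ => x ^ (-k)) (-k * (1:ℝ) ^ (-k - 1)) 1 :=
      Real.hasDerivAt_rpow_const (Or.inl one_ne_zero)
    have h2 : HasDerivAt (fun s : ℝ => 1 + s) 1 0 := (hasDerivAt_id 0).const_add 1
    have h1' : HasDerivAt (fun x : ℝ => x ^ (-k)) (-k * (1:ℝ) ^ (-k - 1))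
        ((fun s : ℝ => 1 + s) 0) := by simpa using h1
    have := h1'.comp 0 h2
    simpa [Real.one_rpow, Function.comp_def] using this
  have hs := hasDerivAt_iff_tendsto_slope.1 hd
  have : Tendsto (fun s : ℝ => -(slope (fun s : ℝ => (1 + s) ^ (-k)) 0 s))
      (nhdsWithin 0 {(0:ℝ)}ᶜ) (nhds (-(-k))) := hs.neg
  rw [neg_neg] at this
  refine this.congr (fun s => ?_)
  simp [slope_def_field, div_eq_div_iff]
  ring

/-- The ESBIII distribution is heavy-tailed: e^{λx}(1-F(x)) → ∞ as x → ∞, for every λ > 0. -/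
theorem esbiii_heavy_tailed (c k ε : ℝ) (hc : 0 < c) (hk : 0 < k)
    (hε : ε ∈ Set.Ioo (-1 : ℝ) 1) :
    ∀ lam : ℝ, 0 < lam →
      Tendsto (fun x : ℝ => Real.exp (lam * x) * (1 - esbiiiCDF c k ε x)) atTop atTop := by
  intro lam hlam
  obtain ⟨hε1, hε2⟩ := hε
  set a : ℝ := 1 + ε with ha_def
  have ha : 0 < a := by linarith
  set t : ℝ → ℝ := fun x => (x / a) ^ (-c) with ht_def
  -- t tends to 0 within {0}ᶜ
  have hdiv : Tendsto (fun x : ℝ => x / a) atTop atTop :=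
    tendsto_id.atTop_div_const ha
  have ht0 : Tendsto t atTop (nhds 0) :=
    (tendsto_rpow_neg_atTop hc).comp hdiv
  have htpos : ∀ᶠ x : ℝ in atTop, 0 < t x := by
    filter_upwards [eventually_gt_atTop 0] with x hx
    exact Real.rpow_pos_of_pos (div_pos hx ha) _
  have ht : Tendsto t atTop (nhdsWithin 0 {(0:ℝ)}ᶜ) := by
    refine tendsto_nhdsWithin_of_tendsto_nhds_of_eventually_within _ ht0 ?_
    filter_upwards [htpos] with x hx
    exact ne_of_gt hx
  -- second factor tends to (a/2)*k
  have hcomp : Tendsto (fun x => (a / 2) * ((1 - (1 + t x) ^ (-k)) / t x)) atTop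
      (nhds ((a / 2) * k)) :=
    ((esbiii_slope_limit k).comp ht).const_mul _
  -- first factor tends to atTop
  have hmain1 : Tendsto (fun x : ℝ => Real.exp (lam * x) * t x) atTop atTop := by
    have h1 := (tendsto_exp_mul_div_rpow_atTop c lam hlam).const_mul_atTop
      (Real.rpow_pos_of_pos ha c)
    refine h1.congr' ?_
    filter_upwards [eventually_gt_atTop 0] with x hx
    have hxa : 0 < x / a := div_pos hx ha
    show a ^ c * (Real.exp (lam * x) / x ^ c) = Real.exp (lam * x) * (x / a) ^ (-c)
    rw [Real.rpow_neg hxa.le, Real.div_rpow hx.le ha.le]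
    field_simp
  have hprod := hmain1.atTop_mul_pos (by positivity : (0:ℝ) < (a / 2) * k) hcomp
  refine hprod.congr' ?_
  filter_upwards [eventually_gt_atTop 0, htpos] with x hx htx
  have hx0 : (0:ℝ) ≤ x := hx.le
  have h1F : 1 - esbiiiCDF c k ε x = (a / 2) * (1 - (1 + t x) ^ (-k)) := by
    rw [esbiiiCDF, if_pos hx0]
    rw [ht_def, ha_def]
    ring
  rw [h1F]
  have htne : t x ≠ 0 := ne_of_gt htx
  field_simp
end
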